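/- If X, Y ⊆ P with X ∩ Y nonempty, X ∩ Y ∉ Γ, and X ∈ Γ and Y ∈ Γ, then h(X ∩ Y) + h(X ∪ Y) + 1 ≤ h(X) + h(Y), i.e., H(X ∩ Y) + H(X ∪ Y) + H(S) ≤ H(X) + H(Y). -/

import Mathlib

open MeasureTheory Finset

/-- Shannon entropy of a random variable with values in a finite type:
`H(f) = ∑ₐ −P(f = a)·log P(f = a)`. -/
noncomputable def shannonEntropy {Ω : Type} [MeasurableSpace Ω] {α : Type} [Fintype α]
    (μ : Measure Ω) (f : Ω → α) : ℝ :=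
  ∑ a : α, Real.negMulLog ((μ (f ⁻¹' {a})).toReal)

/-- A family of random variables on a common probability space: one (finite-valued)
random variable `secret` for the secret, and one random variable `share p` for the
share of each participant `p`. -/
structure Scheme (P : Type) [Fintype P] [DecidableEq P] where
  (Ω : Type)
  [mΩ : MeasurableSpace Ω]
  (μ : Measure Ω)
  [prob : IsProbabilityMeasure μ]
  (SecT : Type)
  [secFin : Fintype SecT]
  (ShT : P → Type)
  [shFin : ∀ p, Fintype (ShT p)]
  (secret : Ω → SecT)
  (share : (p : P) → Ω → ShT p)
  (secret_meas : ∀ s : Set SecT, MeasurableSet (secret ⁻¹' s))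
  (share_meas : ∀ p, ∀ s : Set (ShT p), MeasurableSet (share p ⁻¹' s))

namespace Scheme

variable {P : Type} [Fintype P] [DecidableEq P]

/-- `H(S)`: the entropy of the secret. -/
noncomputable def Hsec (S : Scheme P) : ℝ :=
  letI := S.mΩ; letI := S.secFin
  shannonEntropy S.μ S.secret

/-- `H(X)`: the joint entropy of the shares of the participants in `X`. -/
noncomputable def Hset (S : Scheme P) (X : Finset P) : ℝ :=
  letI := S.mΩ; letI := S.shFin
  shannonEntropy S.μ (fun ω => fun p : {y // y ∈ X} => S.share p.1 ω)

/-- `H(X ∪ {S})`: the joint entropy of the shares of the participants in `X`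
together with the secret. -/
noncomputable def HsetS (S : Scheme P) (X : Finset P) : ℝ :=
  letI := S.mΩ; letI := S.secFin; letI := S.shFin
  shannonEntropy S.μ (fun ω => ((fun p : {y // y ∈ X} => S.share p.1 ω), S.secret ω))

/-- The normalized entropy `h(X) = H(X)/H(S)`. -/
noncomputable def hset (S : Scheme P) (X : Finset P) : ℝ := S.Hset X / S.Hsec

/-- The conditional normalized entropy `h(X|Y) = h(X ∪ Y) − h(Y)`. -/
noncomputable def hcond (S : Scheme P) (X Y : Finset P) : ℝ :=
  S.hset (X ∪ Y) - S.hset Y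

/-- `Σ` is a perfect secret sharing scheme for the access structure `Γ`:
the conditional entropy `H(S|X) = H(X ∪ {S}) − H(X)` equals `0` for every
qualified set `X` and equals `H(S)` for every unqualified set `X`. -/
def IsPerfect (S : Scheme P) (Γ : Finset P → Prop) : Prop :=
  (∀ X : Finset P, Γ X → S.HsetS X - S.Hset X = 0) ∧
  (∀ X : Finset P, ¬ Γ X → S.HsetS X - S.Hset X = S.Hsec)

end Scheme

lemma sum_toReal_measure_preimage {Ω α : Type} [MeasurableSpace Ω] [Fintype α]
    (μ : Measure Ω) [IsProbabilityMeasure μ] (f : Ω → α)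
    (hf : ∀ a : α, MeasurableSet (f ⁻¹' {a})) :
    ∑ a : α, (μ (f ⁻¹' {a})).toReal = 1 := by
  rw [← ENNReal.toReal_sum (fun a _ => measure_ne_top μ _)]
  rw [MeasureTheory.sum_measure_preimage_singleton _ (fun a _ => hf a)]
  simp

lemma toReal_measure_eq_sum_fiber {Ω β : Type} [MeasurableSpace Ω] [Fintype β]
    (μ : Measure Ω) [IsFiniteMeasure μ] (A : Set Ω) (g : Ω → β)
    (hg : ∀ b : β, MeasurableSet (g ⁻¹' {b})) :
    (μ A).toReal = ∑ b : β, (μ (g ⁻¹' {b} ∩ A)).toReal := by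
  have h1 : ∀ b : β, μ (g ⁻¹' {b} ∩ A) = μ.restrict A (g ⁻¹' {b}) := by
    intro b; rw [Measure.restrict_apply (hg b)]
  simp_rw [h1]
  rw [← ENNReal.toReal_sum (fun b _ => measure_ne_top _ _)]
  rw [MeasureTheory.sum_measure_preimage_singleton _ (fun b _ => hg b)]
  simp [Measure.restrict_apply_univ]

lemma shannonEntropy_comp_eq {Ω α β : Type} [MeasurableSpace Ω] [Fintype α] [Fintype β]
    (μ : Measure Ω) (F : Ω → α) (G : Ω → β) (e : α → β) (he : Function.Injective e)
    (hFG : ∀ ω, G ω = e (F ω)) :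
    shannonEntropy μ G = shannonEntropy μ F := by
  unfold shannonEntropy
  classical
  have hpre : ∀ a : α, G ⁻¹' {e a} = F ⁻¹' {a} := by
    intro a
    ext ω
    simp only [Set.mem_preimage, Set.mem_singleton_iff, hFG ω]
    exact ⟨fun h => he h, fun h => by rw [h]⟩
  have hzero : ∀ b : β, b ∉ Finset.univ.image e → Real.negMulLog ((μ (G ⁻¹' {b})).toReal) = 0 := by
    intro b hb
    have : G ⁻¹' {b} = ∅ := by
      ext ω
      simp only [Set.mem_preimage, Set.mem_singleton_iff, Set.mem_empty_iff_false, iff_false]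
      intro h
      exact hb (Finset.mem_image.mpr ⟨F ω, Finset.mem_univ _, by rw [← hFG ω, h]⟩)
    rw [this]
    simp [Real.negMulLog]
  rw [← Finset.sum_subset (Finset.subset_univ (Finset.univ.image e)) (fun b _ hb => hzero b hb)]
  rw [Finset.sum_image (fun a _ a' _ h => he h)]
  simp_rw [hpre]

lemma submod_aux {α β γ : Type} [Fintype α] [Fintype β] [Fintype γ]
    (p : α → β → γ → ℝ) (hp : ∀ a b c, 0 ≤ p a b c)
    (hsum : ∑ c : γ, ∑ a : α, ∑ b : β, p a b c = 1) :
    ∑ c : γ, ∑ a : α, ∑ b : β,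
      p a b c * (Real.log (∑ b' : β, p a b' c) + Real.log (∑ a' : α, p a' b c)
        - Real.log (p a b c) - Real.log (∑ a' : α, ∑ b' : β, p a' b' c)) ≤ 0 := by
  set s12 : α → γ → ℝ := fun a c => ∑ b' : β, p a b' c with hs12
  set s23 : β → γ → ℝ := fun b c => ∑ a' : α, p a' b c with hs23
  set s3 : γ → ℝ := fun c => ∑ a' : α, ∑ b' : β, p a' b' c with hs3
  have hs12nn : ∀ a c, 0 ≤ s12 a c := fun a c => Finset.sum_nonneg fun b _ => hp a b c
  have hs23nn : ∀ b c, 0 ≤ s23 b c := fun b c => Finset.sum_nonneg fun a _ => hp a b c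
  have hs3nn : ∀ c, 0 ≤ s3 c := fun c => Finset.sum_nonneg fun a _ => hs12nn a c
  have hle12 : ∀ a b c, p a b c ≤ s12 a c := fun a b c =>
    Finset.single_le_sum (fun b' _ => hp a b' c) (mem_univ b)
  have hle23 : ∀ a b c, p a b c ≤ s23 b c := fun a b c =>
    Finset.single_le_sum (fun a' _ => hp a' b c) (mem_univ a)
  have hle3 : ∀ a c, s12 a c ≤ s3 c := fun a c =>
    Finset.single_le_sum (fun a' _ => hs12nn a' c) (mem_univ a)
  -- q
  set q : α → β → γ → ℝ := fun a b c => if s3 c = 0 then 0 else s12 a c * s23 b c / s3 c with hq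
  have hterm : ∀ a b c,
      p a b c * (Real.log (s12 a c) + Real.log (s23 b c)
        - Real.log (p a b c) - Real.log (s3 c)) ≤ q a b c - p a b c := by
    intro a b c
    rcases eq_or_lt_of_le (hp a b c) with h0 | h0
    · rw [← h0]
      simp only [zero_mul, sub_zero]
      have : 0 ≤ q a b c := by
        rw [hq]; dsimp only
        split
        · exact le_refl 0
        · exact div_nonneg (mul_nonneg (hs12nn a c) (hs23nn b c)) (hs3nn c)
      linarith
    · have h12 : 0 < s12 a c := lt_of_lt_of_le h0 (hle12 a b c)
      have h23 : 0 < s23 b c := lt_of_lt_of_le h0 (hle23 a b c)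
      have h3 : 0 < s3 c := lt_of_lt_of_le h12 (hle3 a c)
      have hqv : q a b c = s12 a c * s23 b c / s3 c := by
        rw [hq]; dsimp only; rw [if_neg (ne_of_gt h3)]
      set x : ℝ := s12 a c * s23 b c / (p a b c * s3 c) with hx
      have hxpos : 0 < x := by positivity
      have hlogx : Real.log (s12 a c) + Real.log (s23 b c)
          - Real.log (p a b c) - Real.log (s3 c) = Real.log x := by
        rw [hx, Real.log_div (by positivity) (by positivity),
          Real.log_mul (ne_of_gt h12) (ne_of_gt h23),
          Real.log_mul (ne_of_gt h0) (ne_of_gt h3)]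
        ring
      rw [hlogx]
      have := Real.log_le_sub_one_of_pos hxpos
      have hpx : p a b c * x = q a b c := by
        rw [hqv, hx]; field_simp
      calc p a b c * Real.log x ≤ p a b c * (x - 1) := by
            exact mul_le_mul_of_nonneg_left this (le_of_lt h0)
        _ = p a b c * x - p a b c := by ring
        _ = q a b c - p a b c := by rw [hpx]
  calc ∑ c : γ, ∑ a : α, ∑ b : β,
      p a b c * (Real.log (s12 a c) + Real.log (s23 b c)
        - Real.log (p a b c) - Real.log (s3 c))
      ≤ ∑ c : γ, ∑ a : α, ∑ b : β, (q a b c - p a b c) := by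
        refine Finset.sum_le_sum fun c _ => Finset.sum_le_sum fun a _ =>
          Finset.sum_le_sum fun b _ => hterm a b c
    _ = (∑ c : γ, ∑ a : α, ∑ b : β, q a b c) - 1 := by
        rw [← hsum]; simp [Finset.sum_sub_distrib]; rfl
    _ ≤ 1 - 1 := by
        have hqc : ∀ c, ∑ a : α, ∑ b : β, q a b c ≤ s3 c := by
          intro c
          by_cases h : s3 c = 0
          · simp [hq, h, hs3nn c]
          · have : ∑ a : α, ∑ b : β, q a b c = s3 c := by
              simp only [hq, if_neg h]
              have h1 : ∑ b : β, s23 b c = s3 c := by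
                rw [hs23, hs3]; exact Finset.sum_comm
              have h2 : ∀ a, ∑ b : β, s12 a c * s23 b c / s3 c = s12 a c := by
                intro a
                rw [← Finset.sum_div, ← Finset.mul_sum, h1, mul_div_assoc, div_self h, mul_one]
              simp_rw [h2]
              rfl
            linarith
        calc (∑ c : γ, ∑ a : α, ∑ b : β, q a b c) - 1 ≤ (∑ c : γ, s3 c) - 1 :=
              sub_le_sub_right (Finset.sum_le_sum fun c _ => hqc c) 1
          _ = 1 - 1 := by rw [hs3] at hsum ⊢; rw [hsum]
    _ = 0 := by ring


lemma entropy_submodular {Ω α β γ : Type} [MeasurableSpace Ω] [Fintype α] [Fintype β] [Fintype γ]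
    (μ : Measure Ω) [IsProbabilityMeasure μ] (f : Ω → α) (g : Ω → β) (h : Ω → γ)
    (hf : ∀ a : α, MeasurableSet (f ⁻¹' {a}))
    (hg : ∀ b : β, MeasurableSet (g ⁻¹' {b}))
    (hh : ∀ c : γ, MeasurableSet (h ⁻¹' {c})) :
    shannonEntropy μ h + shannonEntropy μ (fun ω => (f ω, g ω, h ω)) ≤
      shannonEntropy μ (fun ω => (f ω, h ω)) + shannonEntropy μ (fun ω => (g ω, h ω)) := by
  classical
  set p : α → β → γ → ℝ := fun a b c => (μ (f ⁻¹' {a} ∩ (g ⁻¹' {b} ∩ h ⁻¹' {c}))).toReal with hpdef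
  have hmeas : ∀ a b c, MeasurableSet (f ⁻¹' {a} ∩ (g ⁻¹' {b} ∩ h ⁻¹' {c})) :=
    fun a b c => (hf a).inter ((hg b).inter (hh c))
  have hpnn : ∀ a b c, 0 ≤ p a b c := fun a b c => ENNReal.toReal_nonneg
  -- marginals
  have hm12 : ∀ a c, (μ ((fun ω => (f ω, h ω)) ⁻¹' {(a, c)})).toReal = ∑ b : β, p a b c := by
    intro a c
    have hset : (fun ω => (f ω, h ω)) ⁻¹' {(a, c)} = f ⁻¹' {a} ∩ h ⁻¹' {c} := by
      ext ω; simp [Prod.ext_iff]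
    rw [hset, toReal_measure_eq_sum_fiber μ _ g hg]
    apply Finset.sum_congr rfl
    intro b _
    have : g ⁻¹' {b} ∩ (f ⁻¹' {a} ∩ h ⁻¹' {c}) = f ⁻¹' {a} ∩ (g ⁻¹' {b} ∩ h ⁻¹' {c}) := by
      ext ω; simp; tauto
    rw [this]
  have hm23 : ∀ b c, (μ ((fun ω => (g ω, h ω)) ⁻¹' {(b, c)})).toReal = ∑ a : α, p a b c := by
    intro b c
    have hset : (fun ω => (g ω, h ω)) ⁻¹' {(b, c)} = g ⁻¹' {b} ∩ h ⁻¹' {c} := by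
      ext ω; simp [Prod.ext_iff]
    rw [hset, toReal_measure_eq_sum_fiber μ _ f hf]
  have hm3 : ∀ c, (μ (h ⁻¹' {c})).toReal = ∑ a : α, ∑ b : β, p a b c := by
    intro c
    rw [toReal_measure_eq_sum_fiber μ _ f hf]
    apply Finset.sum_congr rfl
    intro a _
    rw [toReal_measure_eq_sum_fiber μ _ g hg]
    apply Finset.sum_congr rfl
    intro b _
    have : g ⁻¹' {b} ∩ (f ⁻¹' {a} ∩ h ⁻¹' {c}) = f ⁻¹' {a} ∩ (g ⁻¹' {b} ∩ h ⁻¹' {c}) := by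
      ext ω; simp; tauto
    rw [this]
  have hm123 : ∀ a b c, (μ ((fun ω => (f ω, g ω, h ω)) ⁻¹' {(a, b, c)})).toReal = p a b c := by
    intro a b c
    have : (fun ω => (f ω, g ω, h ω)) ⁻¹' {(a, b, c)} = f ⁻¹' {a} ∩ (g ⁻¹' {b} ∩ h ⁻¹' {c}) := by
      ext ω; simp [Prod.ext_iff]
    rw [this]
  have hsum : ∑ c : γ, ∑ a : α, ∑ b : β, p a b c = 1 := by
    have := sum_toReal_measure_preimage μ h hh
    rw [← this]
    exact (Finset.sum_congr rfl fun c _ => (hm3 c).symm)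
  -- rewrite entropies
  have H3 : shannonEntropy μ h = ∑ c : γ, Real.negMulLog (∑ a : α, ∑ b : β, p a b c) := by
    unfold shannonEntropy; exact Finset.sum_congr rfl fun c _ => by rw [hm3 c]
  have H123 : shannonEntropy μ (fun ω => (f ω, g ω, h ω)) =
      ∑ a : α, ∑ b : β, ∑ c : γ, Real.negMulLog (p a b c) := by
    unfold shannonEntropy
    rw [Fintype.sum_prod_type]
    exact Finset.sum_congr rfl fun a _ => by
      rw [Fintype.sum_prod_type]
      exact Finset.sum_congr rfl fun b _ => Finset.sum_congr rfl fun c _ => by rw [hm123]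
  have H12 : shannonEntropy μ (fun ω => (f ω, h ω)) =
      ∑ a : α, ∑ c : γ, Real.negMulLog (∑ b : β, p a b c) := by
    unfold shannonEntropy
    rw [Fintype.sum_prod_type]
    exact Finset.sum_congr rfl fun a _ => Finset.sum_congr rfl fun c _ => by rw [hm12]
  have H23 : shannonEntropy μ (fun ω => (g ω, h ω)) =
      ∑ b : β, ∑ c : γ, Real.negMulLog (∑ a : α, p a b c) := by
    unfold shannonEntropy
    rw [Fintype.sum_prod_type]
    exact Finset.sum_congr rfl fun b _ => Finset.sum_congr rfl fun c _ => by rw [hm23]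
  rw [H3, H123, H12, H23]
  have key := submod_aux p hpnn hsum
  have hswap : ∀ F : α → β → γ → ℝ, ∑ a : α, ∑ b : β, ∑ c : γ, F a b c
      = ∑ c : γ, ∑ a : α, ∑ b : β, F a b c := by
    intro F
    calc ∑ a : α, ∑ b : β, ∑ c : γ, F a b c
        = ∑ a : α, ∑ c : γ, ∑ b : β, F a b c :=
          Finset.sum_congr rfl fun a _ => Finset.sum_comm
      _ = ∑ c : γ, ∑ a : α, ∑ b : β, F a b c := Finset.sum_comm
  have hnml : ∀ (x : ℝ), Real.negMulLog x = -(x * Real.log x) := fun x => by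
    rw [Real.negMulLog, neg_mul]
  have e3 : ∑ c : γ, Real.negMulLog (∑ a : α, ∑ b : β, p a b c)
      = -∑ c : γ, ∑ a : α, ∑ b : β, p a b c * Real.log (∑ a' : α, ∑ b' : β, p a' b' c) := by
    rw [← Finset.sum_neg_distrib]
    refine Finset.sum_congr rfl fun c _ => ?_
    rw [hnml]
    congr 1
    rw [Finset.sum_mul]
    exact Finset.sum_congr rfl fun a _ => by rw [Finset.sum_mul]
  have e123 : ∑ a : α, ∑ b : β, ∑ c : γ, Real.negMulLog (p a b c)
      = -∑ c : γ, ∑ a : α, ∑ b : β, p a b c * Real.log (p a b c) := by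
    rw [← hswap, ← Finset.sum_neg_distrib]
    refine Finset.sum_congr rfl fun a _ => ?_
    rw [← Finset.sum_neg_distrib]
    refine Finset.sum_congr rfl fun b _ => ?_
    rw [← Finset.sum_neg_distrib]
    exact Finset.sum_congr rfl fun c _ => hnml _
  have e12 : ∑ a : α, ∑ c : γ, Real.negMulLog (∑ b : β, p a b c)
      = -∑ c : γ, ∑ a : α, ∑ b : β, p a b c * Real.log (∑ b' : β, p a b' c) := by
    rw [show (∑ a : α, ∑ c : γ, Real.negMulLog (∑ b : β, p a b c))
        = ∑ c : γ, ∑ a : α, Real.negMulLog (∑ b : β, p a b c) from Finset.sum_comm,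
      ← Finset.sum_neg_distrib]
    refine Finset.sum_congr rfl fun c _ => ?_
    rw [← Finset.sum_neg_distrib]
    refine Finset.sum_congr rfl fun a _ => ?_
    rw [hnml]
    congr 1
    rw [Finset.sum_mul]
  have e23 : ∑ b : β, ∑ c : γ, Real.negMulLog (∑ a : α, p a b c)
      = -∑ c : γ, ∑ a : α, ∑ b : β, p a b c * Real.log (∑ a' : α, p a' b c) := by
    rw [show (∑ b : β, ∑ c : γ, Real.negMulLog (∑ a : α, p a b c))
        = ∑ c : γ, ∑ b : β, Real.negMulLog (∑ a : α, p a b c) from Finset.sum_comm,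
      ← Finset.sum_neg_distrib]
    refine Finset.sum_congr rfl fun c _ => ?_
    rw [show (∑ a : α, ∑ b : β, p a b c * Real.log (∑ a' : α, p a' b c))
        = ∑ b : β, ∑ a : α, p a b c * Real.log (∑ a' : α, p a' b c) from Finset.sum_comm,
      ← Finset.sum_neg_distrib]
    refine Finset.sum_congr rfl fun b _ => ?_
    rw [hnml]
    congr 1
    rw [Finset.sum_mul]
  have expand : ∑ c : γ, ∑ a : α, ∑ b : β,
      p a b c * (Real.log (∑ b' : β, p a b' c) + Real.log (∑ a' : α, p a' b c)
        - Real.log (p a b c) - Real.log (∑ a' : α, ∑ b' : β, p a' b' c))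
      = (∑ c : γ, ∑ a : α, ∑ b : β, p a b c * Real.log (∑ b' : β, p a b' c))
      + (∑ c : γ, ∑ a : α, ∑ b : β, p a b c * Real.log (∑ a' : α, p a' b c))
      - (∑ c : γ, ∑ a : α, ∑ b : β, p a b c * Real.log (p a b c))
      - (∑ c : γ, ∑ a : α, ∑ b : β, p a b c * Real.log (∑ a' : α, ∑ b' : β, p a' b' c)) := by
    simp only [mul_add, mul_sub, Finset.sum_add_distrib, Finset.sum_sub_distrib]
  rw [expand] at key
  rw [e3, e123, e12, e23]
  linarith



/-- If `X ∩ Y` is nonempty and unqualified while `X` and `Y` are both qualified, then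
`h(X ∩ Y) + h(X ∪ Y) + 1 ≤ h(X) + h(Y)`, i.e.
`H(X ∩ Y) + H(X ∪ Y) + H(S) ≤ H(X) + H(Y)`. -/
theorem qualified_two_ways {P : Type} [Fintype P] [DecidableEq P]
    (Γ : Finset P → Prop) (hΓ : ∀ X Y : Finset P, X ⊆ Y → Γ X → Γ Y)
    (S : Scheme P) (hperf : S.IsPerfect Γ) (hpos : 0 < S.Hsec)
    (X Y : Finset P) (hXY : (X ∩ Y).Nonempty)
    (hXYq : ¬ Γ (X ∩ Y)) (hXq : Γ X) (hYq : Γ Y) :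
    S.Hset (X ∩ Y) + S.Hset (X ∪ Y) + S.Hsec ≤ S.Hset X + S.Hset Y := by
  classical
  letI := S.mΩ
  letI := S.prob
  letI := S.secFin
  letI := S.shFin
  obtain ⟨hqual, hunq⟩ := hperf
  have hXuYq : Γ (X ∪ Y) := hΓ X (X ∪ Y) Finset.subset_union_left hXq
  have hEX : S.HsetS X = S.Hset X := by have := hqual X hXq; linarith
  have hEY : S.HsetS Y = S.Hset Y := by have := hqual Y hYq; linarith
  have hEU : S.HsetS (X ∪ Y) = S.Hset (X ∪ Y) := by have := hqual _ hXuYq; linarith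
  have hEI : S.HsetS (X ∩ Y) = S.Hset (X ∩ Y) + S.Hsec := by
    have := hunq _ hXYq; linarith
  suffices hmain : S.HsetS (X ∩ Y) + S.HsetS (X ∪ Y) ≤ S.HsetS X + S.HsetS Y by
    rw [hEX, hEY, hEU, hEI] at hmain; linarith
  -- set up the three random variables
  set f : S.Ω → ((p : {y // y ∈ X \ Y}) → S.ShT p.1) :=
    fun ω => fun p => S.share p.1 ω with hf
  set g : S.Ω → ((p : {y // y ∈ Y \ X}) → S.ShT p.1) :=
    fun ω => fun p => S.share p.1 ω with hg
  set h : S.Ω → (((p : {y // y ∈ X ∩ Y}) → S.ShT p.1) × S.SecT) :=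
    fun ω => (fun p => S.share p.1 ω, S.secret ω) with hh
  -- measurability of singleton preimages
  have hmeas_pi : ∀ (Z : Finset P) (v : (p : {y // y ∈ Z}) → S.ShT p.1),
      MeasurableSet ((fun ω => fun p : {y // y ∈ Z} => S.share p.1 ω) ⁻¹' {v}) := by
    intro Z v
    have : (fun ω => fun p : {y // y ∈ Z} => S.share p.1 ω) ⁻¹' {v}
        = ⋂ p : {y // y ∈ Z}, S.share p.1 ⁻¹' {v p} := by
      ext ω
      simp only [Set.mem_preimage, Set.mem_singleton_iff, Set.mem_iInter, funext_iff]
    rw [this]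
    exact MeasurableSet.iInter fun p => S.share_meas p.1 _
  have hfm : ∀ a, MeasurableSet (f ⁻¹' {a}) := fun a => hmeas_pi (X \ Y) a
  have hgm : ∀ b, MeasurableSet (g ⁻¹' {b}) := fun b => hmeas_pi (Y \ X) b
  have hhm : ∀ c, MeasurableSet (h ⁻¹' {c}) := by
    rintro ⟨v, s⟩
    have : h ⁻¹' {(v, s)}
        = ((fun ω => fun p : {y // y ∈ X ∩ Y} => S.share p.1 ω) ⁻¹' {v})
          ∩ (S.secret ⁻¹' {s}) := by
      ext ω
      simp only [hh, Set.mem_preimage, Set.mem_singleton_iff, Set.mem_inter_iff,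
        Prod.ext_iff]
    rw [this]
    exact (hmeas_pi (X ∩ Y) v).inter (S.secret_meas _)
  have hsub := entropy_submodular S.μ f g h hfm hgm hhm
  -- identify the four HsetS values with entropies of f,g,h combinations
  have hI : S.HsetS (X ∩ Y) = shannonEntropy S.μ h := rfl
  have hX' : S.HsetS X = shannonEntropy S.μ (fun ω => (f ω, h ω)) := by
    refine (shannonEntropy_comp_eq S.μ
      (fun ω => ((fun p : {y // y ∈ X} => S.share p.1 ω), S.secret ω))
      (fun ω => (f ω, h ω))
      (fun vs => ((fun p : {y // y ∈ X \ Y} =>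
          vs.1 ⟨p.1, (Finset.mem_sdiff.mp p.2).1⟩),
        ((fun p : {y // y ∈ X ∩ Y} => vs.1 ⟨p.1, (Finset.mem_inter.mp p.2).1⟩), vs.2)))
      ?_ (fun ω => rfl)).symm
    rintro ⟨v, s⟩ ⟨v', s'⟩ hvs
    simp only [Prod.mk.injEq] at hvs
    obtain ⟨h1, h2, h3⟩ := hvs
    refine Prod.ext ?_ h3
    funext q
    by_cases hq : q.1 ∈ Y
    · exact congrFun h2 ⟨q.1, Finset.mem_inter.mpr ⟨q.2, hq⟩⟩
    · exact congrFun h1 ⟨q.1, Finset.mem_sdiff.mpr ⟨q.2, hq⟩⟩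
  have hY' : S.HsetS Y = shannonEntropy S.μ (fun ω => (g ω, h ω)) := by
    refine (shannonEntropy_comp_eq S.μ
      (fun ω => ((fun p : {y // y ∈ Y} => S.share p.1 ω), S.secret ω))
      (fun ω => (g ω, h ω))
      (fun vs => ((fun p : {y // y ∈ Y \ X} =>
          vs.1 ⟨p.1, (Finset.mem_sdiff.mp p.2).1⟩),
        ((fun p : {y // y ∈ X ∩ Y} => vs.1 ⟨p.1, (Finset.mem_inter.mp p.2).2⟩), vs.2)))
      ?_ (fun ω => rfl)).symm
    rintro ⟨v, s⟩ ⟨v', s'⟩ hvs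
    simp only [Prod.mk.injEq] at hvs
    obtain ⟨h1, h2, h3⟩ := hvs
    refine Prod.ext ?_ h3
    funext q
    by_cases hq : q.1 ∈ X
    · exact congrFun h2 ⟨q.1, Finset.mem_inter.mpr ⟨hq, q.2⟩⟩
    · exact congrFun h1 ⟨q.1, Finset.mem_sdiff.mpr ⟨q.2, hq⟩⟩
  have hU' : S.HsetS (X ∪ Y) = shannonEntropy S.μ (fun ω => (f ω, g ω, h ω)) := by
    refine (shannonEntropy_comp_eq S.μ
      (fun ω => ((fun p : {y // y ∈ X ∪ Y} => S.share p.1 ω), S.secret ω))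
      (fun ω => (f ω, g ω, h ω))
      (fun vs => ((fun p : {y // y ∈ X \ Y} =>
          vs.1 ⟨p.1, Finset.mem_union_left _ (Finset.mem_sdiff.mp p.2).1⟩),
        ((fun p : {y // y ∈ Y \ X} =>
          vs.1 ⟨p.1, Finset.mem_union_right _ (Finset.mem_sdiff.mp p.2).1⟩),
        ((fun p : {y // y ∈ X ∩ Y} =>
          vs.1 ⟨p.1, Finset.mem_union_left _ (Finset.mem_inter.mp p.2).1⟩), vs.2))))
      ?_ (fun ω => rfl)).symm
    rintro ⟨v, s⟩ ⟨v', s'⟩ hvs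
    simp only [Prod.mk.injEq] at hvs
    obtain ⟨h1, h2, h3, h4⟩ := hvs
    refine Prod.ext ?_ h4
    funext q
    by_cases hqX : q.1 ∈ X
    · by_cases hqY : q.1 ∈ Y
      · exact congrFun h3 ⟨q.1, Finset.mem_inter.mpr ⟨hqX, hqY⟩⟩
      · exact congrFun h1 ⟨q.1, Finset.mem_sdiff.mpr ⟨hqX, hqY⟩⟩
    · have hqY : q.1 ∈ Y := by
        rcases Finset.mem_union.mp q.2 with h' | h'
        · exact absurd h' hqX
        · exact h'
      exact congrFun h2 ⟨q.1, Finset.mem_sdiff.mpr ⟨hqY, hqX⟩⟩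
  rw [hI, hX', hY', hU']
  exact hsub
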